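/- For all positive integers n, the double sum over integers i, j of binom(2n, n+i) * binom(2n, n+j) * |i^4 - j^4| equals (2 n^3 (4n-3) / (2n-1)) * binom(2n, n)^2. -/

import Mathlib

open Finset

/-- Binomial coefficient `n.choose k` extended to an integer lower index,
vanishing when `k < 0` (and, as usual, when `k > n`). -/
def ichoose (n : ℕ) (k : ℤ) : ℤ := if 0 ≤ k then (n.choose k.toNat : ℤ) else 0

lemma ichoose_ofNat (m j : ℕ) : ichoose m (j : ℤ) = (m.choose j : ℤ) := by
  simp [ichoose]

lemma ichoose_neg (m : ℕ) {k : ℤ} (hk : k < 0) : ichoose m k = 0 := by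
  simp [ichoose, not_le.mpr hk]

lemma ichoose_of_gt (m : ℕ) {k : ℤ} (hk : (m : ℤ) < k) : ichoose m k = 0 := by
  have h0 : 0 ≤ k := le_of_lt (lt_of_le_of_lt (Int.ofNat_nonneg m) hk)
  rw [ichoose, if_pos h0, Nat.choose_eq_zero_of_lt (by omega), Int.natCast_zero]

lemma ichoose_pascal (m : ℕ) (k : ℤ) :
    ichoose (m + 1) k = ichoose m (k - 1) + ichoose m k := by
  rcases lt_or_ge k 0 with hk | hk
  · rw [ichoose_neg _ hk, ichoose_neg _ (by omega), ichoose_neg _ (by omega)]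
    ring
  · obtain ⟨j, rfl⟩ := Int.eq_ofNat_of_zero_le hk
    rcases j with _ | j
    · show ichoose (m+1) ((0:ℕ):ℤ) = ichoose m (((0:ℕ):ℤ) - 1) + ichoose m ((0:ℕ):ℤ)
      rw [show (((0:ℕ):ℤ) - 1) = (-1 : ℤ) by norm_num, ichoose_neg m (show (-1:ℤ) < 0 by norm_num)]
      simp [ichoose]
    · have h1 : ((j + 1 : ℕ) : ℤ) - 1 = (j : ℤ) := by push_cast; ring
      rw [h1, ichoose_ofNat, ichoose_ofNat, ichoose_ofNat, Nat.choose_succ_succ]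
      push_cast; ring

lemma ichoose_mul_left (m : ℕ) (k : ℤ) :
    k * ichoose (m + 1) k = (m + 1) * ichoose m (k - 1) := by
  rcases lt_or_ge k 0 with hk | hk
  · rw [ichoose_neg _ hk, ichoose_neg _ (by omega)]; ring
  · obtain ⟨j, rfl⟩ := Int.eq_ofNat_of_zero_le hk
    rcases j with _ | j
    · show ((0:ℕ):ℤ) * ichoose (m+1) ((0:ℕ):ℤ) = (↑m + 1) * ichoose m (((0:ℕ):ℤ) - 1)
      rw [show (((0:ℕ):ℤ) - 1) = (-1 : ℤ) by norm_num, ichoose_neg m (show (-1:ℤ) < 0 by norm_num)]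
      simp
    · have h1 : ((j + 1 : ℕ) : ℤ) - 1 = (j : ℤ) := by push_cast; ring
      rw [h1, ichoose_ofNat, ichoose_ofNat]
      have := Nat.add_one_mul_choose_eq m j
      have h2 : ((m + 1) * Nat.choose m j : ℤ) = ((m+1).choose (j+1) * (j+1) : ℤ) := by
        exact_mod_cast congrArg Nat.cast this
      push_cast at h2 ⊢
      linarith [h2]

lemma ichoose_symm (m : ℕ) (k : ℤ) : ichoose m ((m : ℤ) - k) = ichoose m k := by
  rcases lt_or_ge k 0 with hk | hk
  · rw [ichoose_neg _ hk, ichoose_of_gt _ (by omega)]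
  · rcases le_or_gt k (m : ℤ) with hk2 | hk2
    · obtain ⟨j, rfl⟩ := Int.eq_ofNat_of_zero_le hk
      have hj : j ≤ m := by exact_mod_cast hk2
      have h1 : (m : ℤ) - (j : ℤ) = ((m - j : ℕ) : ℤ) := by
        push_cast [Nat.cast_sub hj]; ring
      rw [h1, ichoose_ofNat, ichoose_ofNat, Nat.choose_symm hj]
    · rw [ichoose_of_gt _ hk2, ichoose_neg _ (by omega)]

lemma ichoose_mul_right (m : ℕ) (k : ℤ) :
    ((m : ℤ) + 1 - k) * ichoose (m + 1) k = (m + 1) * ichoose m k := by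
  have h1 : ichoose (m + 1) k = ichoose (m + 1) ((m : ℤ) + 1 - k) := by
    have := ichoose_symm (m + 1) k
    push_cast at this ⊢
    rw [← this]
  rw [h1]
  have h2 := ichoose_mul_left m ((m : ℤ) + 1 - k)
  rw [h2]
  have h3 : (m : ℤ) + 1 - k - 1 = (m : ℤ) - k := by ring
  rw [h3, ichoose_symm]

/-- Key telescoping identity. -/
lemma key_telescope (m : ℕ) (t i : ℤ) :
    (2 * i - t) * (ichoose (m + 1) i * ichoose (m + 1) (t - i))
      = (m + 1) * (ichoose m (i - 1) * ichoose m (t - i)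
          - ichoose m i * ichoose m (t - i - 1)) := by
  have h1 := ichoose_mul_left m i
  have h2 := ichoose_mul_left m (t - i)
  have p1 := ichoose_pascal m i
  have p2 := ichoose_pascal m (t - i)
  have ht : t - i - 1 = (t - i) - 1 := by ring
  rw [ht]
  linear_combination (ichoose (m + 1) (t - i)) * h1 - (ichoose (m + 1) i) * h2
    + ((m : ℤ) + 1) * (ichoose m (i-1)) * p2 - ((m : ℤ) + 1) * (ichoose m ((t-i)-1)) * p1
lemma sum_Icc_split (f : ℤ → ℚ) (a b c : ℤ) (h1 : a ≤ b + 1) (h2 : b ≤ c) :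
    ∑ i ∈ Icc a c, f i = ∑ i ∈ Icc a b, f i + ∑ i ∈ Icc (b + 1) c, f i := by
  rw [← Finset.sum_union]
  · congr 1
    ext x
    simp only [mem_union, mem_Icc]
    omega
  · rw [Finset.disjoint_left]
    intro x hx hx'
    simp only [mem_Icc] at hx hx'
    omega

lemma sum_Icc_succ_top' (f : ℤ → ℚ) (a b : ℤ) (h : a ≤ b + 1) :
    ∑ i ∈ Icc a (b + 1), f i = ∑ i ∈ Icc a b, f i + f (b + 1) := by
  rw [sum_Icc_split f a b (b + 1) h (by omega), Finset.Icc_self, Finset.sum_singleton]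

lemma sum_telescope_Icc (f : ℤ → ℚ) (a b : ℤ) (h : a ≤ b + 1) :
    ∑ i ∈ Icc a b, (f i - f (i + 1)) = f a - f (b + 1) := by
  have key : ∀ m : ℕ, ∀ b : ℤ, b = a - 1 + m →
      ∑ i ∈ Icc a b, (f i - f (i + 1)) = f a - f (b + 1) := by
    intro m
    induction m with
    | zero =>
        intro b hb
        rw [show b = a - 1 from by omega, show Icc a (a-1) = ∅ from Finset.Icc_eq_empty (by omega),
          Finset.sum_empty, show a - 1 + 1 = a by ring]
        ring
    | succ m ih =>
        intro b hb
        have hb' : b = (b - 1) + 1 := by ring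
        rw [hb', sum_Icc_succ_top' _ a (b-1) (by omega), ih (b-1) (by push_cast at hb ⊢; omega)]
        rw [show b - 1 + 1 = b by ring]
        ring
  obtain ⟨m, hm⟩ : ∃ m : ℕ, b = a - 1 + m := ⟨(b - (a-1)).toNat, by omega⟩
  exact key m b hm

lemma abel_Icc (f g : ℤ → ℚ) (a b : ℤ) (hab : a ≤ b) :
    ∑ i ∈ Icc a b, g i * (f i - f (i + 1))
      = g a * f a - g b * f (b + 1) + ∑ i ∈ Icc (a + 1) b, (g i - g (i - 1)) * f i := by
  have key : ∀ m : ℕ, ∀ b : ℤ, b = a + m →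
      ∑ i ∈ Icc a b, g i * (f i - f (i + 1))
      = g a * f a - g b * f (b + 1) + ∑ i ∈ Icc (a + 1) b, (g i - g (i - 1)) * f i := by
    intro m
    induction m with
    | zero =>
        intro b hb
        rw [show b = a from by omega, Finset.Icc_self, Finset.sum_singleton,
          show Icc (a+1) a = ∅ from Finset.Icc_eq_empty (by omega), Finset.sum_empty]
        ring
    | succ m ih =>
        intro b hb
        have hb' : b = (b - 1) + 1 := by ring
        rw [hb', sum_Icc_succ_top' _ a (b-1) (by push_cast at hb; omega),
          ih (b-1) (by push_cast at hb ⊢; omega),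
          sum_Icc_succ_top' _ (a+1) (b-1) (by push_cast at hb; omega),
          show b - 1 + 1 = b by ring, show b - 1 = b - 1 from rfl]
        ring
  obtain ⟨m, hm⟩ : ∃ m : ℕ, b = a + m := ⟨(b - a).toNat, by omega⟩
  exact key m b hm
lemma ichoose_zero_outside (n : ℕ) (i : ℤ) (h : i < -(n:ℤ) ∨ (n:ℤ) < i) :
    ichoose (2*n) ((n:ℤ) + i) = 0 := by
  rcases h with h | h
  · exact ichoose_neg _ (by omega)
  · exact ichoose_of_gt _ (by push_cast; omega)

lemma W_eval (k : ℕ) (s σ : ℤ) (hs1 : 2*σ ≤ s) (hs2 : s ≤ 2*σ + 1)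
    (h1 : -((k:ℤ)+2) ≤ σ) (h2 : σ ≤ (k:ℤ)+2) :
    ∑ i ∈ Icc (-((k:ℤ)+2)) ((k:ℤ)+2),
        ((ichoose (2*k+4) (((k:ℤ)+2) + i) : ℚ) * (ichoose (2*k+4) (((k:ℤ)+2) + (s - i)) : ℚ)
          * |2*(i:ℚ) - (s:ℚ)|)
      = (4*(k:ℚ)+8) * (ichoose (2*k+3) (((k:ℤ)+2) + σ) : ℚ)
          * (ichoose (2*k+3) (((k:ℤ)+2) + (s - σ) - 1) : ℚ) := by
  set N : ℤ := (k:ℤ) + 2 with hN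
  set f : ℤ → ℚ := fun i =>
      (ichoose (2*k+3) (N + i - 1) : ℚ) * (ichoose (2*k+3) (N + (s - i)) : ℚ) with hf
  have key : ∀ i : ℤ, ((2*i - s : ℤ) : ℚ) *
      ((ichoose (2*k+4) (N + i) : ℚ) * (ichoose (2*k+4) (N + (s - i)) : ℚ))
      = (2*(k:ℚ)+4) * (f i - f (i+1)) := by
    intro i
    have h := key_telescope (2*k+3) (2*N + s) (N + i)
    rw [show 2*(N+i) - (2*N+s) = 2*i - s from by ring,
        show 2*N + s - (N+i) = N + (s - i) from by ring,
        show (2*k+3+1 : ℕ) = 2*k+4 from rfl] at h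
    have h' := congrArg (fun z : ℤ => (z : ℚ)) h
    push_cast at h'
    simp only [hf]
    rw [show N + (i+1) - 1 = N + i from by ring,
        show N + (s - (i+1)) = N + (s - i) - 1 from by ring]
    push_cast
    linear_combination h'
  have hsplit := sum_Icc_split
    (fun i => ((ichoose (2*k+4) (N + i) : ℚ) * (ichoose (2*k+4) (N + (s - i)) : ℚ)
        * |2*(i:ℚ) - (s:ℚ)|)) (-N) σ N (by omega) h2
  rw [hsplit]
  have hlow : ∑ i ∈ Icc (-N) σ,
      ((ichoose (2*k+4) (N + i) : ℚ) * (ichoose (2*k+4) (N + (s - i)) : ℚ) * |2*(i:ℚ) - (s:ℚ)|)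
      = (2*(k:ℚ)+4) * (f (σ+1) - f (-N)) := by
    have congr1 : ∀ i ∈ Icc (-N) σ,
        ((ichoose (2*k+4) (N + i) : ℚ) * (ichoose (2*k+4) (N + (s - i)) : ℚ) * |2*(i:ℚ) - (s:ℚ)|)
        = (2*(k:ℚ)+4) * ((-f) i - (-f) (i+1)) := by
      intro i hi
      rw [mem_Icc] at hi
      have h0 : (2*i - s : ℤ) ≤ 0 := by omega
      have h0' : ((2*i - s : ℤ) : ℚ) ≤ 0 := by exact_mod_cast h0
      push_cast at h0'
      have habs : |2*(i:ℚ) - (s:ℚ)| = -(2*(i:ℚ) - (s:ℚ)) := abs_of_nonpos h0'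
      rw [habs]
      have hk := key i
      push_cast at hk
      simp only [Pi.neg_apply]
      linear_combination -hk
    rw [Finset.sum_congr rfl congr1, ← Finset.mul_sum,
      sum_telescope_Icc (-f) (-N) σ (by omega)]
    simp only [Pi.neg_apply]
    ring
  have hhigh : ∑ i ∈ Icc (σ+1) N,
      ((ichoose (2*k+4) (N + i) : ℚ) * (ichoose (2*k+4) (N + (s - i)) : ℚ) * |2*(i:ℚ) - (s:ℚ)|)
      = (2*(k:ℚ)+4) * (f (σ+1) - f (N+1)) := by
    have congr1 : ∀ i ∈ Icc (σ+1) N,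
        ((ichoose (2*k+4) (N + i) : ℚ) * (ichoose (2*k+4) (N + (s - i)) : ℚ) * |2*(i:ℚ) - (s:ℚ)|)
        = (2*(k:ℚ)+4) * (f i - f (i+1)) := by
      intro i hi
      rw [mem_Icc] at hi
      have h0 : (0:ℤ) ≤ 2*i - s := by omega
      have h0' : (0:ℚ) ≤ ((2*i - s : ℤ) : ℚ) := by exact_mod_cast h0
      push_cast at h0'
      have habs : |2*(i:ℚ) - (s:ℚ)| = 2*(i:ℚ) - (s:ℚ) := abs_of_nonneg h0'
      rw [habs]
      have hk := key i
      push_cast at hk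
      linear_combination hk
    rw [Finset.sum_congr rfl congr1, ← Finset.mul_sum,
      sum_telescope_Icc f (σ+1) N (by omega)]
  rw [hlow, hhigh]
  have hf1 : f (-N) = 0 := by
    simp only [hf]
    rw [show N + -N - 1 = -1 from by ring, ichoose_neg _ (by norm_num)]
    push_cast; ring
  have hf2 : f (N+1) = 0 := by
    simp only [hf]
    rw [show N + (N+1) - 1 = 2*N from by ring,
      ichoose_of_gt (2*k+3) (show ((2*k+3:ℕ):ℤ) < 2*N from by push_cast; omega)]
    push_cast; ring
  rw [hf1, hf2]
  simp only [hf]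
  rw [show N + (σ+1) - 1 = N + σ from by ring,
      show N + (s - (σ+1)) = N + (s - σ) - 1 from by ring]
  push_cast
  ring
lemma E1_eval (k : ℕ) :
    ∑ σ ∈ Icc (1:ℤ) ((k:ℤ)+2),
        ((σ:ℚ))^3 * ((ichoose (2*k+3) (((k:ℤ)+2)+σ) : ℚ) * (ichoose (2*k+3) (((k:ℤ)+2)+σ-1) : ℚ))
      = (2*(k:ℚ)+3)/2 * ((ichoose (2*k+2) ((k:ℤ)+2) : ℚ) * (ichoose (2*k+2) ((k:ℤ)+1) : ℚ))
        + (2*(k:ℚ)+3)*((k:ℚ)+1) * ((ichoose (2*k+1) ((k:ℤ)+2) : ℚ) * (ichoose (2*k+1) ((k:ℤ)) : ℚ)) := by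
  set N : ℤ := (k:ℤ) + 2 with hN
  set f : ℤ → ℚ := fun σ =>
      (ichoose (2*k+2) (N+σ-1) : ℚ) * (ichoose (2*k+2) (N-σ) : ℚ) with hf
  set r : ℤ → ℚ := fun σ =>
      (ichoose (2*k+1) (N+σ-2) : ℚ) * (ichoose (2*k+1) (N-σ) : ℚ) with hr
  set g : ℤ → ℚ := fun σ => (2*(k:ℚ)+3)/2 * (σ:ℚ)^2 with hg
  have hsym : ∀ σ : ℤ, ichoose (2*k+3) (N+σ-1) = ichoose (2*k+3) (N-σ) := by
    intro σ
    have := ichoose_symm (2*k+3) (N+σ-1)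
    rw [show ((2*k+3:ℕ):ℤ) - (N+σ-1) = N - σ from by push_cast; omega] at this
    exact this.symm
  have key1 : ∀ σ : ℤ, ((2*σ : ℤ):ℚ) *
      ((ichoose (2*k+3) (N+σ) : ℚ) * (ichoose (2*k+3) (N+σ-1) : ℚ))
      = (2*(k:ℚ)+3) * (f σ - f (σ+1)) := by
    intro σ
    have h := key_telescope (2*k+2) (2*N) (N+σ)
    rw [show 2*(N+σ) - 2*N = 2*σ from by ring,
        show 2*N - (N+σ) = N - σ from by ring,
        show (2*k+2+1 : ℕ) = 2*k+3 from rfl] at h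
    have h' := congrArg (fun z : ℤ => (z : ℚ)) h
    push_cast at h'
    simp only [hf]
    rw [hsym σ, show N + (σ+1) - 1 = N + σ from by ring,
        show N - (σ+1) = N - σ - 1 from by ring]
    push_cast
    linear_combination h'
  have key2 : ∀ σ : ℤ, ((2*σ - 1 : ℤ):ℚ) * f σ = (2*(k:ℚ)+2) * (r σ - r (σ+1)) := by
    intro σ
    have h := key_telescope (2*k+1) (2*N-1) (N+σ-1)
    rw [show 2*(N+σ-1) - (2*N-1) = 2*σ - 1 from by ring,
        show 2*N - 1 - (N+σ-1) = N - σ from by ring,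
        show N + σ - 1 - 1 = N + σ - 2 from by ring,
        show (2*k+1+1 : ℕ) = 2*k+2 from rfl] at h
    have h' := congrArg (fun z : ℤ => (z : ℚ)) h
    push_cast at h'
    simp only [hf, hr]
    rw [show N + (σ+1) - 2 = N + σ - 1 from by ring,
        show N - (σ+1) = N - σ - 1 from by ring]
    push_cast
    linear_combination h'
  have step1 : ∀ σ ∈ Icc (1:ℤ) N,
      ((σ:ℚ))^3 * ((ichoose (2*k+3) (N+σ) : ℚ) * (ichoose (2*k+3) (N+σ-1) : ℚ))
      = g σ * (f σ - f (σ+1)) := by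
    intro σ _
    have := key1 σ
    simp only [hg]
    push_cast at this
    linear_combination ((σ:ℚ)^2/2) * this
  rw [Finset.sum_congr rfl step1, abel_Icc f g 1 N (by omega),
    show (1:ℤ)+1 = 2 from by norm_num]
  have hfN : f (N+1) = 0 := by
    simp only [hf]
    rw [show N + (N+1) - 1 = 2*N from by ring,
      ichoose_of_gt (2*k+2) (show ((2*k+2:ℕ):ℤ) < 2*N from by push_cast; omega)]
    push_cast; ring
  have step2 : ∀ σ ∈ Icc (2:ℤ) N,
      (g σ - g (σ-1)) * f σ = ((2*(k:ℚ)+3)*((k:ℚ)+1)) * (r σ - r (σ+1)) := by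
    intro σ _
    have := key2 σ
    simp only [hg]
    push_cast at this ⊢
    linear_combination ((2*(k:ℚ)+3)/2) * this
  rw [Finset.sum_congr rfl step2, ← Finset.mul_sum,
    sum_telescope_Icc r 2 N (by omega), hfN]
  have hrN : r (N+1) = 0 := by
    simp only [hr]
    rw [show N + (N+1) - 2 = 2*N - 1 from by ring,
      ichoose_of_gt (2*k+1) (show ((2*k+1:ℕ):ℤ) < 2*N - 1 from by push_cast; omega)]
    push_cast; ring
  rw [hrN]
  simp only [hf, hr, hg]
  rw [show N + 1 - 1 = N from by ring, show N + 2 - 2 = N from by ring,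
      show N - 1 = (k:ℤ)+1 from by omega, show N - 2 = (k:ℤ) from by omega, hN]
  push_cast
  ring

lemma E2_eval (k : ℕ) :
    ∑ σ ∈ Icc (0:ℤ) ((k:ℤ)+1),
        (2*(σ:ℚ)+1)^3 * ((ichoose (2*k+3) (((k:ℤ)+2)+σ) : ℚ))^2
      = (2*(k:ℚ)+3) * ((ichoose (2*k+2) ((k:ℤ)+1) : ℚ))^2
        + (2*(k:ℚ)+3) * (8*(k:ℚ)+8) * ((ichoose (2*k+1) ((k:ℤ)+1) : ℚ) * (ichoose (2*k+1) ((k:ℤ)) : ℚ)) := by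
  set N : ℤ := (k:ℤ) + 2 with hN
  set f : ℤ → ℚ := fun σ =>
      (ichoose (2*k+2) (N+σ-1) : ℚ) * (ichoose (2*k+2) (N-σ-1) : ℚ) with hf
  set r : ℤ → ℚ := fun σ =>
      (ichoose (2*k+1) (N+σ-2) : ℚ) * (ichoose (2*k+1) (N-σ-1) : ℚ) with hr
  set g : ℤ → ℚ := fun σ => (2*(k:ℚ)+3) * (2*(σ:ℚ)+1)^2 with hg
  have hsym : ∀ σ : ℤ, ichoose (2*k+3) (N+σ) = ichoose (2*k+3) (N-σ-1) := by
    intro σ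
    have := ichoose_symm (2*k+3) (N+σ)
    rw [show ((2*k+3:ℕ):ℤ) - (N+σ) = N - σ - 1 from by push_cast; omega] at this
    exact this.symm
  have key1 : ∀ σ : ℤ, ((2*σ + 1 : ℤ):ℚ) *
      ((ichoose (2*k+3) (N+σ) : ℚ) * (ichoose (2*k+3) (N-σ-1) : ℚ))
      = (2*(k:ℚ)+3) * (f σ - f (σ+1)) := by
    intro σ
    have h := key_telescope (2*k+2) (2*N-1) (N+σ)
    rw [show 2*(N+σ) - (2*N-1) = 2*σ + 1 from by ring,
        show 2*N - 1 - (N+σ) = N - σ - 1 from by ring,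
        show (2*k+2+1 : ℕ) = 2*k+3 from rfl] at h
    have h' := congrArg (fun z : ℤ => (z : ℚ)) h
    push_cast at h'
    simp only [hf]
    rw [show N + (σ+1) - 1 = N + σ from by ring,
        show N - (σ+1) - 1 = N - σ - 1 - 1 from by ring]
    push_cast
    linear_combination h'
  have key2 : ∀ σ : ℤ, ((2*σ : ℤ):ℚ) * f σ = (2*(k:ℚ)+2) * (r σ - r (σ+1)) := by
    intro σ
    have h := key_telescope (2*k+1) (2*N-2) (N+σ-1)
    rw [show 2*(N+σ-1) - (2*N-2) = 2*σ from by ring,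
        show 2*N - 2 - (N+σ-1) = N - σ - 1 from by ring,
        show N + σ - 1 - 1 = N + σ - 2 from by ring,
        show (2*k+1+1 : ℕ) = 2*k+2 from rfl] at h
    have h' := congrArg (fun z : ℤ => (z : ℚ)) h
    push_cast at h'
    simp only [hf, hr]
    rw [show N + (σ+1) - 2 = N + σ - 1 from by ring,
        show N - (σ+1) - 1 = N - σ - 1 - 1 from by ring]
    push_cast
    linear_combination h'
  have step1 : ∀ σ ∈ Icc (0:ℤ) ((k:ℤ)+1),
      (2*(σ:ℚ)+1)^3 * ((ichoose (2*k+3) (N+σ) : ℚ))^2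
      = g σ * (f σ - f (σ+1)) := by
    intro σ _
    have hc : ((ichoose (2*k+3) (N+σ) : ℚ))^2
        = (ichoose (2*k+3) (N+σ) : ℚ) * (ichoose (2*k+3) (N-σ-1) : ℚ) := by
      rw [sq]
      congr 1
      exact_mod_cast congrArg (fun z : ℤ => (z:ℚ)) (hsym σ)
    rw [hc]
    have := key1 σ
    simp only [hg]
    push_cast at this
    linear_combination (2*(σ:ℚ)+1)^2 * this
  rw [Finset.sum_congr rfl step1, abel_Icc f g 0 ((k:ℤ)+1) (by omega),
    show (0:ℤ)+1 = 1 from by norm_num]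
  have hfN : f ((k:ℤ)+1+1) = 0 := by
    simp only [hf]
    rw [show N + ((k:ℤ)+1+1) - 1 = 2*N - 1 from by omega,
      ichoose_of_gt (2*k+2) (show ((2*k+2:ℕ):ℤ) < 2*N - 1 from by push_cast; omega)]
    push_cast; ring
  have step2 : ∀ σ ∈ Icc (1:ℤ) ((k:ℤ)+1),
      (g σ - g (σ-1)) * f σ = ((2*(k:ℚ)+3) * 4 * (2*(k:ℚ)+2)) * (r σ - r (σ+1)) := by
    intro σ _
    have := key2 σ
    simp only [hg]
    push_cast at this ⊢
    linear_combination ((2*(k:ℚ)+3) * 4) * this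
  rw [Finset.sum_congr rfl step2, ← Finset.mul_sum,
    sum_telescope_Icc r 1 ((k:ℤ)+1) (by omega), hfN]
  have hrN : r ((k:ℤ)+1+1) = 0 := by
    simp only [hr]
    rw [show N + ((k:ℤ)+1+1) - 2 = 2*N - 2 from by omega,
      ichoose_of_gt (2*k+1) (show ((2*k+1:ℕ):ℤ) < 2*N - 2 from by push_cast; omega)]
    push_cast; ring
  rw [hrN]
  simp only [hf, hr, hg]
  rw [show N + 0 - 1 = (k:ℤ)+1 from by omega, show N - 0 - 1 = (k:ℤ)+1 from by omega,
      show N + 1 - 2 = (k:ℤ)+1 from by omega, show N - 1 - 1 = (k:ℤ) from by omega]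
  push_cast
  ring
lemma finsum_reduce (n : ℕ) :
    (∑ᶠ i : ℤ, ∑ᶠ j : ℤ,
        ((ichoose (2*n) ((n:ℤ) + i) : ℚ) * (ichoose (2*n) ((n:ℤ) + j) : ℚ)
          * |(i:ℚ)^4 - (j:ℚ)^4|))
      = ∑ i ∈ Icc (-(n:ℤ)) (n:ℤ), ∑ j ∈ Icc (-(n:ℤ)) (n:ℤ),
        ((ichoose (2*n) ((n:ℤ) + i) : ℚ) * (ichoose (2*n) ((n:ℤ) + j) : ℚ)
          * |(i:ℚ)^4 - (j:ℚ)^4|) := by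
  have hmem : ∀ x : ℤ, x ∉ Icc (-(n:ℤ)) (n:ℤ) → ichoose (2*n) ((n:ℤ) + x) = 0 := by
    intro x hx
    rw [mem_Icc] at hx
    exact ichoose_zero_outside n x (by omega)
  have inner : ∀ i : ℤ, (∑ᶠ j : ℤ,
      ((ichoose (2*n) ((n:ℤ) + i) : ℚ) * (ichoose (2*n) ((n:ℤ) + j) : ℚ) * |(i:ℚ)^4 - (j:ℚ)^4|))
      = ∑ j ∈ Icc (-(n:ℤ)) (n:ℤ),
      ((ichoose (2*n) ((n:ℤ) + i) : ℚ) * (ichoose (2*n) ((n:ℤ) + j) : ℚ) * |(i:ℚ)^4 - (j:ℚ)^4|) := by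
    intro i
    apply finsum_eq_sum_of_support_subset
    intro j hj
    simp only [Function.mem_support] at hj
    by_contra hmem'
    apply hj
    rw [hmem j hmem']
    push_cast
    ring
  rw [finsum_congr inner]
  apply finsum_eq_sum_of_support_subset
  intro i hi
  simp only [Function.mem_support] at hi
  by_contra hmem'
  apply hi
  apply Finset.sum_eq_zero
  intro j _
  rw [hmem i hmem']
  push_cast
  ring

lemma abs_pow4 (x y : ℚ) :
    |x^4 - y^4| = (|x+y|^3 * |x-y| + |x+y| * |x-y|^3) / 2 := by
  have h1 : x^4 - y^4 = ((x+y) * (x-y)) * (x^2 + y^2) := by ring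
  rw [h1, abs_mul, abs_mul,
    abs_of_nonneg (show (0:ℚ) ≤ x^2 + y^2 by positivity),
    show |x+y|^3 * |x-y| + |x+y| * |x-y|^3
      = |x+y| * |x-y| * (|x+y|^2 + |x-y|^2) from by ring, sq_abs, sq_abs]
  ring

lemma aa_neg (n : ℕ) (j : ℤ) : ichoose (2*n) ((n:ℤ) + -j) = ichoose (2*n) ((n:ℤ) + j) := by
  have := ichoose_symm (2*n) ((n:ℤ) + j)
  rw [show ((2*n:ℕ):ℤ) - ((n:ℤ) + j) = (n:ℤ) + -j from by push_cast; ring] at this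
  exact this

lemma parity_split (N : ℤ) (hN : 0 ≤ N) (F : ℤ → ℚ) :
    ∑ s ∈ Icc (-(2*N)) (2*N), F s
      = ∑ σ ∈ Icc (-N) N, F (2*σ) + ∑ σ ∈ Icc (-N) (N-1), F (2*σ+1) := by
  have himg : Icc (-(2*N)) (2*N)
      = (Icc (-N) N).image (fun σ => 2*σ) ∪ (Icc (-N) (N-1)).image (fun σ => 2*σ+1) := by
    ext s
    simp only [mem_union, mem_image, mem_Icc]
    constructor
    · intro hs
      rcases Int.even_or_odd s with ⟨σ, hσ⟩ | ⟨σ, hσ⟩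
      · exact Or.inl ⟨σ, ⟨by omega, by omega⟩, by omega⟩
      · exact Or.inr ⟨σ, ⟨by omega, by omega⟩, by omega⟩
    · rintro (⟨σ, hσ, rfl⟩ | ⟨σ, hσ, rfl⟩) <;> omega
  have hdisj : Disjoint ((Icc (-N) N).image (fun σ => 2*σ))
      ((Icc (-N) (N-1)).image (fun σ => 2*σ+1)) := by
    rw [Finset.disjoint_left]
    rintro x hx hx'
    simp only [mem_image, mem_Icc] at hx hx'
    obtain ⟨σ, _, rfl⟩ := hx
    obtain ⟨τ, _, hτ⟩ := hx'
    omega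
  rw [himg, Finset.sum_union hdisj,
    Finset.sum_image (by intro a _ b _ h; dsimp only at h; omega),
    Finset.sum_image (by intro a _ b _ h; dsimp only at h; omega)]

lemma fold_sym (N : ℤ) (hN : 0 ≤ N) (F : ℤ → ℚ) (hsym : ∀ σ, F (-σ) = F σ) (h0 : F 0 = 0) :
    ∑ σ ∈ Icc (-N) N, F σ = 2 * ∑ σ ∈ Icc 1 N, F σ := by
  rw [sum_Icc_split F (-N) 0 N (by omega) hN, show (0:ℤ)+1 = 1 from by norm_num]
  have h1 : ∑ σ ∈ Icc (-N) 0, F σ = ∑ σ ∈ Icc 0 N, F σ := by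
    apply Finset.sum_nbij' (fun σ => -σ) (fun σ => -σ)
    · intro a ha; rw [mem_Icc] at *; omega
    · intro a ha; rw [mem_Icc] at *; omega
    · intro a _; ring
    · intro a _; ring
    · intro a _; exact (hsym a).symm
  rw [h1, sum_Icc_split F 0 0 N (by omega) hN, Finset.Icc_self, Finset.sum_singleton, h0,
    show (0:ℤ)+1 = 1 from by norm_num]
  ring

lemma fold_sym' (M : ℤ) (hM : 0 ≤ M) (F : ℤ → ℚ) (hsym : ∀ σ, F (-1-σ) = F σ) :
    ∑ σ ∈ Icc (-(M+1)) M, F σ = 2 * ∑ σ ∈ Icc 0 M, F σ := by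
  rw [sum_Icc_split F (-(M+1)) (-1) M (by omega) (by omega), show (-1:ℤ)+1 = 0 from by norm_num]
  have h1 : ∑ σ ∈ Icc (-(M+1)) (-1), F σ = ∑ σ ∈ Icc 0 M, F σ := by
    apply Finset.sum_nbij' (fun σ => -1-σ) (fun σ => -1-σ)
    · intro a ha; rw [mem_Icc] at *; omega
    · intro a ha; rw [mem_Icc] at *; omega
    · intro a _; ring
    · intro a _; ring
    · intro a _; exact (hsym a).symm
  rw [h1]
  ring
lemma swap_inner (n : ℕ) (i : ℤ) :
    ∑ j ∈ Icc (-(n:ℤ)) (n:ℤ),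
        ((ichoose (2*n) ((n:ℤ)+i) : ℚ) * (ichoose (2*n) ((n:ℤ)+j) : ℚ)
          * (|(i:ℚ)+(j:ℚ)| * |(i:ℚ)-(j:ℚ)|^3))
      = ∑ j ∈ Icc (-(n:ℤ)) (n:ℤ),
        ((ichoose (2*n) ((n:ℤ)+i) : ℚ) * (ichoose (2*n) ((n:ℤ)+j) : ℚ)
          * (|(i:ℚ)+(j:ℚ)|^3 * |(i:ℚ)-(j:ℚ)|)) := by
  apply Finset.sum_nbij' (fun σ => -σ) (fun σ => -σ)
  · intro a ha; rw [mem_Icc] at *; omega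
  · intro a ha; rw [mem_Icc] at *; omega
  · intro a _; ring
  · intro a _; ring
  · intro a _
    rw [aa_neg n a]
    push_cast
    rw [show (i:ℚ) + -(a:ℚ) = (i:ℚ) - (a:ℚ) from by ring,
        show (i:ℚ) - -(a:ℚ) = (i:ℚ) + (a:ℚ) from by ring]
    ring

lemma reindex (n : ℕ) :
    ∑ i ∈ Icc (-(n:ℤ)) (n:ℤ), ∑ j ∈ Icc (-(n:ℤ)) (n:ℤ),
        ((ichoose (2*n) ((n:ℤ)+i) : ℚ) * (ichoose (2*n) ((n:ℤ)+j) : ℚ)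
          * (|(i:ℚ)+(j:ℚ)|^3 * |(i:ℚ)-(j:ℚ)|))
      = ∑ s ∈ Icc (-(2*(n:ℤ))) (2*(n:ℤ)), ∑ i ∈ Icc (-(n:ℤ)) (n:ℤ),
        ((ichoose (2*n) ((n:ℤ)+i) : ℚ) * (ichoose (2*n) ((n:ℤ)+(s-i)) : ℚ)
          * (|(s:ℚ)|^3 * |2*(i:ℚ)-(s:ℚ)|)) := by
  rw [← Finset.sum_product', ← Finset.sum_product']
  have hstep : ∀ p ∈ (Icc (-(n:ℤ)) (n:ℤ) ×ˢ Icc (-(n:ℤ)) (n:ℤ)),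
      ((ichoose (2*n) ((n:ℤ)+p.1) : ℚ) * (ichoose (2*n) ((n:ℤ)+p.2) : ℚ)
          * (|(p.1:ℚ)+(p.2:ℚ)|^3 * |(p.1:ℚ)-(p.2:ℚ)|))
      = ((ichoose (2*n) ((n:ℤ)+p.1) : ℚ) * (ichoose (2*n) ((n:ℤ)+((p.1+p.2)-p.1)) : ℚ)
          * (|((p.1+p.2 : ℤ):ℚ)|^3 * |2*(p.1:ℚ)-((p.1+p.2 : ℤ):ℚ)|)) := by
    intro p _
    rw [show (p.1+p.2)-p.1 = p.2 from by ring]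
    push_cast
    rw [show 2*(p.1:ℚ) - ((p.1:ℚ)+(p.2:ℚ)) = (p.1:ℚ) - (p.2:ℚ) from by ring]
  rw [Finset.sum_congr rfl hstep]
  have hinj : ∀ x ∈ (Icc (-(n:ℤ)) (n:ℤ) ×ˢ Icc (-(n:ℤ)) (n:ℤ)),
      ∀ y ∈ (Icc (-(n:ℤ)) (n:ℤ) ×ˢ Icc (-(n:ℤ)) (n:ℤ)),
      (fun p : ℤ×ℤ => (p.1 + p.2, p.1)) x = (fun p : ℤ×ℤ => (p.1 + p.2, p.1)) y → x = y := by
    rintro ⟨a, b⟩ _ ⟨c, d⟩ _ h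
    simp only [Prod.mk.injEq] at h
    obtain ⟨h1, h2⟩ := h
    simp only [Prod.mk.injEq]
    omega
  have him := Finset.sum_image (s := Icc (-(n:ℤ)) (n:ℤ) ×ˢ Icc (-(n:ℤ)) (n:ℤ))
    (g := fun p : ℤ×ℤ => (p.1 + p.2, p.1))
    (f := fun q : ℤ×ℤ =>
      ((ichoose (2*n) ((n:ℤ)+q.2) : ℚ) * (ichoose (2*n) ((n:ℤ)+(q.1-q.2)) : ℚ)
          * (|(q.1:ℚ)|^3 * |2*(q.2:ℚ)-(q.1:ℚ)|))) hinj
  dsimp only at him ⊢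
  rw [← him]
  apply Finset.sum_subset
  · intro q hq
    simp only [mem_image, mem_product, mem_Icc] at hq
    obtain ⟨p, ⟨hp1, hp2⟩, rfl⟩ := hq
    simp only [mem_product, mem_Icc]
    constructor
    · omega
    · omega
  · intro q hq hq'
    simp only [mem_product, mem_Icc] at hq
    by_cases hcase : -(n:ℤ) ≤ q.1 - q.2 ∧ q.1 - q.2 ≤ (n:ℤ)
    · exfalso
      apply hq'
      simp only [mem_image, mem_product, mem_Icc]
      refine ⟨(q.2, q.1 - q.2), ⟨⟨hq.2.1, hq.2.2⟩, hcase⟩, ?_⟩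
      have : (q.1, q.2) = q := rfl
      rw [← this, Prod.mk.injEq]
      exact ⟨by omega, rfl⟩
    · rw [ichoose_zero_outside n (q.1 - q.2) (by omega)]
      push_cast
      ring
lemma choose_ratios (k : ℕ) :
    ((2*k+4).choose (k+2) : ℚ) = 2 * ((2*k+3).choose (k+2) : ℚ)
    ∧ ((2*k+2).choose (k+1) : ℚ) = ((k:ℚ)+2) * ((2*k+3).choose (k+2) : ℚ) / (2*(k:ℚ)+3)
    ∧ ((2*k+2).choose (k+2) : ℚ) = ((k:ℚ)+1) * ((2*k+3).choose (k+2) : ℚ) / (2*(k:ℚ)+3)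
    ∧ ((2*k+1).choose (k+1) : ℚ) = ((k:ℚ)+2) * ((2*k+3).choose (k+2) : ℚ) / (2*(2*(k:ℚ)+3))
    ∧ ((2*k+1).choose k : ℚ) = ((k:ℚ)+2) * ((2*k+3).choose (k+2) : ℚ) / (2*(2*(k:ℚ)+3))
    ∧ ((2*k+1).choose (k+2) : ℚ) = (k:ℚ) * ((2*k+3).choose (k+2) : ℚ) / (2*(2*(k:ℚ)+3)) := by
  have hpos : (2*(k:ℚ)+3) ≠ 0 := by positivity
  have p1 : (2*k+4).choose (k+2) = (2*k+3).choose (k+1) + (2*k+3).choose (k+2) :=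
    Nat.choose_succ_succ (2*k+3) (k+1)
  have s1 : (2*k+3).choose (k+1) = (2*k+3).choose (k+2) := by
    have := Nat.choose_symm (show k+1 ≤ 2*k+3 by omega)
    rw [show 2*k+3-(k+1) = k+2 from by omega] at this
    exact this.symm
  have q1 : (2*k+3) * (2*k+2).choose (k+1) = (2*k+3).choose (k+2) * (k+2) :=
    Nat.add_one_mul_choose_eq (2*k+2) (k+1)
  have p2 : (2*k+3).choose (k+2) = (2*k+2).choose (k+1) + (2*k+2).choose (k+2) :=
    Nat.choose_succ_succ (2*k+2) (k+1)
  have p3 : (2*k+2).choose (k+1) = (2*k+1).choose k + (2*k+1).choose (k+1) :=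
    Nat.choose_succ_succ (2*k+1) k
  have s2 : (2*k+1).choose k = (2*k+1).choose (k+1) := by
    have := Nat.choose_symm (show k ≤ 2*k+1 by omega)
    rw [show 2*k+1-k = k+1 from by omega] at this
    exact this.symm
  have p4 : (2*k+2).choose (k+2) = (2*k+1).choose (k+1) + (2*k+1).choose (k+2) :=
    Nat.choose_succ_succ (2*k+1) (k+1)
  have P1 := congrArg (Nat.cast : ℕ → ℚ) p1
  have S1 := congrArg (Nat.cast : ℕ → ℚ) s1
  have Q1 := congrArg (Nat.cast : ℕ → ℚ) q1
  have P2 := congrArg (Nat.cast : ℕ → ℚ) p2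
  have P3 := congrArg (Nat.cast : ℕ → ℚ) p3
  have S2 := congrArg (Nat.cast : ℕ → ℚ) s2
  have P4 := congrArg (Nat.cast : ℕ → ℚ) p4
  push_cast at P1 S1 Q1 P2 P3 S2 P4
  have hB : ((2*k+2).choose (k+1) : ℚ) = ((k:ℚ)+2) * ((2*k+3).choose (k+2) : ℚ) / (2*(k:ℚ)+3) := by
    rw [eq_div_iff hpos]
    linear_combination Q1
  have hA : ((2*k+2).choose (k+2) : ℚ) = ((k:ℚ)+1) * ((2*k+3).choose (k+2) : ℚ) / (2*(k:ℚ)+3) := by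
    rw [eq_div_iff hpos]
    linear_combination -(2*(k:ℚ)+3) * P2 - Q1
  have hE : ((2*k+1).choose (k+1) : ℚ) = ((k:ℚ)+2) * ((2*k+3).choose (k+2) : ℚ) / (2*(2*(k:ℚ)+3)) := by
    rw [eq_div_iff (by positivity)]
    linear_combination -(2*(k:ℚ)+3) * P3 - (2*(k:ℚ)+3) * S2 + Q1
  refine ⟨by linear_combination P1 + S1, hB, hA, hE, ?_, ?_⟩
  · rw [S2]; exact hE
  · have mA : (2*(k:ℚ)+3) * ((2*k+2).choose (k+2) : ℚ)
        = ((k:ℚ)+1) * ((2*k+3).choose (k+2) : ℚ) := by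
      linear_combination -(2*(k:ℚ)+3) * P2 - Q1
    have mE : 2*(2*(k:ℚ)+3) * ((2*k+1).choose (k+1) : ℚ)
        = ((k:ℚ)+2) * ((2*k+3).choose (k+2) : ℚ) := by
      linear_combination -(2*(k:ℚ)+3) * P3 - (2*(k:ℚ)+3) * S2 + Q1
    rw [eq_div_iff (by positivity)]
    linear_combination -2*(2*(k:ℚ)+3) * P4 + 2 * mA - mE

lemma sum_Icc_neg_one_one (f : ℤ → ℚ) :
    ∑ i ∈ Icc (-1 : ℤ) 1, f i = f (-1) + f 0 + f 1 := by
  rw [show Icc (-1:ℤ) 1 = Icc (-1) (0+1) from by norm_num,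
    sum_Icc_succ_top' f (-1) 0 (by norm_num),
    show Icc (-1:ℤ) 0 = Icc (-1) (-1+1) from by norm_num,
    sum_Icc_succ_top' f (-1) (-1) (by norm_num), Finset.Icc_self, Finset.sum_singleton]
  norm_num
theorem stmt13 (n : ℕ) (hn : 1 ≤ n) :
    ∑ᶠ i : ℤ, ∑ᶠ j : ℤ,
        ((ichoose (2 * n) (n + i) : ℚ) * (ichoose (2 * n) (n + j) : ℚ)
          * |(i : ℚ) ^ 4 - (j : ℚ) ^ 4|)
      = 2 * (n : ℚ) ^ 3 * (4 * n - 3) / (2 * n - 1) * ((2 * n).choose n : ℚ) ^ 2 := by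
  rw [finsum_reduce n]
  rcases eq_or_lt_of_le hn with h1 | h2
  · -- n = 1
    subst h1
    simp only [show ((1:ℕ):ℤ) = 1 from rfl, show 2*1 = 2 from rfl]
    rw [sum_Icc_neg_one_one]
    simp only [sum_Icc_neg_one_one]
    norm_num [ichoose, show Int.toNat 2 = 2 from rfl]
  · obtain ⟨k, rfl⟩ : ∃ k, n = k + 2 := ⟨n - 2, by omega⟩
    have e1 : ((k+2:ℕ):ℤ) = (k:ℤ)+2 := by push_cast; ring
    have e2 : 2*(k+2) = 2*k+4 := by ring
    simp only [e1, e2]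
    push_cast
    set N : ℤ := (k:ℤ) + 2 with hN
    -- Step 1: |i^4-j^4| -> |i+j|^3 * |i-j|
    have step1 : ∀ i ∈ Icc (-N) N,
        (∑ j ∈ Icc (-N) N,
          ((ichoose (2*k+4) (N+i) : ℚ) * (ichoose (2*k+4) (N+j) : ℚ) * |(i:ℚ)^4 - (j:ℚ)^4|))
        = ∑ j ∈ Icc (-N) N,
          ((ichoose (2*k+4) (N+i) : ℚ) * (ichoose (2*k+4) (N+j) : ℚ)
            * (|(i:ℚ)+(j:ℚ)|^3 * |(i:ℚ)-(j:ℚ)|)) := by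
      intro i _
      have hpt : ∀ j ∈ Icc (-N) N,
          ((ichoose (2*k+4) (N+i) : ℚ) * (ichoose (2*k+4) (N+j) : ℚ) * |(i:ℚ)^4 - (j:ℚ)^4|)
          = ((ichoose (2*k+4) (N+i) : ℚ) * (ichoose (2*k+4) (N+j) : ℚ)
              * (|(i:ℚ)+(j:ℚ)| * |(i:ℚ)-(j:ℚ)|^3))/2
            + ((ichoose (2*k+4) (N+i) : ℚ) * (ichoose (2*k+4) (N+j) : ℚ)
              * (|(i:ℚ)+(j:ℚ)|^3 * |(i:ℚ)-(j:ℚ)|))/2 := by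
        intro j _
        rw [abs_pow4]
        ring
      rw [Finset.sum_congr rfl hpt, Finset.sum_add_distrib, ← Finset.sum_div, ← Finset.sum_div]
      have hs := swap_inner (k+2) i
      simp only [e1, e2] at hs
      rw [hs]
      ring
    rw [Finset.sum_congr rfl step1]
    -- Step 2: reindex (i,j) -> (s,i)
    have hre := reindex (k+2)
    simp only [e1, e2] at hre
    rw [hre]
    rw [parity_split N (by omega)]
    -- symmetry helpers
    have hsymA : ∀ σ : ℤ, ichoose (2*k+3) (N - σ) = ichoose (2*k+3) (N + σ - 1) := by
      intro σ
      have := ichoose_symm (2*k+3) (N + σ - 1)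
      rw [show ((2*k+3:ℕ):ℤ) - (N + σ - 1) = N - σ from by push_cast; omega] at this
      exact this
    have hsymB : ∀ σ : ℤ, ichoose (2*k+3) (N - σ - 1) = ichoose (2*k+3) (N + σ) := by
      intro σ
      have := ichoose_symm (2*k+3) (N + σ)
      rw [show ((2*k+3:ℕ):ℤ) - (N + σ) = N - σ - 1 from by push_cast; omega] at this
      exact this
    -- even part
    have heven : ∀ σ ∈ Icc (-N) N,
        (∑ i ∈ Icc (-N) N,
          ((ichoose (2*k+4) (N+i) : ℚ) * (ichoose (2*k+4) (N+(2*σ-i)) : ℚ)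
            * (|((2*σ:ℤ):ℚ)|^3 * |2*(i:ℚ)-((2*σ:ℤ):ℚ)|)))
        = (32*(k:ℚ)+64) * (|(σ:ℚ)|^3
            * ((ichoose (2*k+3) (N+σ) : ℚ) * (ichoose (2*k+3) (N+σ-1) : ℚ))) := by
      intro σ hσ
      rw [mem_Icc] at hσ
      have hpull : ∀ i ∈ Icc (-N) N,
          ((ichoose (2*k+4) (N+i) : ℚ) * (ichoose (2*k+4) (N+(2*σ-i)) : ℚ)
            * (|((2*σ:ℤ):ℚ)|^3 * |2*(i:ℚ)-((2*σ:ℤ):ℚ)|))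
          = |((2*σ:ℤ):ℚ)|^3 * ((ichoose (2*k+4) (N+i) : ℚ) * (ichoose (2*k+4) (N+(2*σ-i)) : ℚ)
            * |2*(i:ℚ)-((2*σ:ℤ):ℚ)|) := by
        intro i _
        ring
      rw [Finset.sum_congr rfl hpull, ← Finset.mul_sum,
        W_eval k (2*σ) σ (by omega) (by omega) (by omega) (by omega),
        show N + (2*σ - σ) - 1 = N + σ - 1 from by ring]
      have habs : |((2*σ:ℤ):ℚ)| = 2 * |(σ:ℚ)| := by
        push_cast
        rw [abs_mul]
        norm_num
      rw [habs]
      push_cast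
      ring
    rw [Finset.sum_congr rfl heven, ← Finset.mul_sum]
    -- odd part
    have hodd : ∀ σ ∈ Icc (-N) (N-1),
        (∑ i ∈ Icc (-N) N,
          ((ichoose (2*k+4) (N+i) : ℚ) * (ichoose (2*k+4) (N+(2*σ+1-i)) : ℚ)
            * (|((2*σ+1:ℤ):ℚ)|^3 * |2*(i:ℚ)-((2*σ+1:ℤ):ℚ)|)))
        = (4*(k:ℚ)+8) * (|2*(σ:ℚ)+1|^3 * ((ichoose (2*k+3) (N+σ) : ℚ))^2) := by
      intro σ hσ
      rw [mem_Icc] at hσ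
      have hpull : ∀ i ∈ Icc (-N) N,
          ((ichoose (2*k+4) (N+i) : ℚ) * (ichoose (2*k+4) (N+(2*σ+1-i)) : ℚ)
            * (|((2*σ+1:ℤ):ℚ)|^3 * |2*(i:ℚ)-((2*σ+1:ℤ):ℚ)|))
          = |((2*σ+1:ℤ):ℚ)|^3 * ((ichoose (2*k+4) (N+i) : ℚ) * (ichoose (2*k+4) (N+(2*σ+1-i)) : ℚ)
            * |2*(i:ℚ)-((2*σ+1:ℤ):ℚ)|) := by
        intro i _
        ring
      rw [Finset.sum_congr rfl hpull, ← Finset.mul_sum,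
        W_eval k (2*σ+1) σ (by omega) (by omega) (by omega) (by omega),
        show N + (2*σ+1 - σ) - 1 = N + σ from by ring]
      have habs : |((2*σ+1:ℤ):ℚ)| = |2*(σ:ℚ)+1| := by push_cast; ring_nf
      rw [habs, sq]
      push_cast
      ring
    rw [Finset.sum_congr rfl hodd, ← Finset.mul_sum]
    -- fold even part
    have hfoldE := fold_sym N (by omega)
      (fun σ => |(σ:ℚ)|^3 * ((ichoose (2*k+3) (N+σ) : ℚ) * (ichoose (2*k+3) (N+σ-1) : ℚ)))
      (by
        intro σ
        rw [show N + -σ = N - σ from by ring, hsymA σ, hsymB σ]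
        push_cast
        rw [abs_neg]
        ring)
      (by norm_num)
    rw [hfoldE]
    -- fold odd part
    have hfoldO := fold_sym' (N-1) (by omega)
      (fun σ => |2*(σ:ℚ)+1|^3 * ((ichoose (2*k+3) (N+σ) : ℚ))^2)
      (by
        intro σ
        rw [show N + (-1-σ) = N - σ - 1 from by ring, hsymB σ]
        push_cast
        rw [show 2*(-1-(σ:ℚ))+1 = -(2*(σ:ℚ)+1) from by ring, abs_neg])
    rw [show N - 1 + 1 = N from by ring] at hfoldO
    rw [hfoldO]
    -- drop absolute values
    have habs1 : ∀ σ ∈ Icc (1:ℤ) N,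
        |(σ:ℚ)|^3 * ((ichoose (2*k+3) (N+σ) : ℚ) * (ichoose (2*k+3) (N+σ-1) : ℚ))
        = ((σ:ℚ))^3 * ((ichoose (2*k+3) (N+σ) : ℚ) * (ichoose (2*k+3) (N+σ-1) : ℚ)) := by
      intro σ hσ
      rw [mem_Icc] at hσ
      have : (0:ℚ) ≤ (σ:ℚ) := by exact_mod_cast (by omega : (0:ℤ) ≤ σ)
      rw [abs_of_nonneg this]
    have habs2 : ∀ σ ∈ Icc (0:ℤ) (N-1),
        |2*(σ:ℚ)+1|^3 * ((ichoose (2*k+3) (N+σ) : ℚ))^2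
        = (2*(σ:ℚ)+1)^3 * ((ichoose (2*k+3) (N+σ) : ℚ))^2 := by
      intro σ hσ
      rw [mem_Icc] at hσ
      have h0 : (0:ℚ) ≤ (σ:ℚ) := by exact_mod_cast (by omega : (0:ℤ) ≤ σ)
      rw [abs_of_nonneg (by linarith)]
    rw [Finset.sum_congr rfl habs1, Finset.sum_congr rfl habs2]
    rw [show N - 1 = (k:ℤ)+1 from by omega]
    rw [hN, E1_eval k, E2_eval k]
    -- convert ichoose to Nat.choose
    have conv : ∀ (m j : ℕ), ichoose m ((j:ℕ):ℤ) = (m.choose j : ℤ) := ichoose_ofNat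
    have c1 : ichoose (2*k+2) ((k:ℤ)+2) = ((2*k+2).choose (k+2) : ℤ) := by
      have := ichoose_ofNat (2*k+2) (k+2)
      rwa [show ((k+2:ℕ):ℤ) = (k:ℤ)+2 from by push_cast; ring] at this
    have c2 : ichoose (2*k+2) ((k:ℤ)+1) = ((2*k+2).choose (k+1) : ℤ) := by
      have := ichoose_ofNat (2*k+2) (k+1)
      rwa [show ((k+1:ℕ):ℤ) = (k:ℤ)+1 from by push_cast; ring] at this
    have c3 : ichoose (2*k+1) ((k:ℤ)+2) = ((2*k+1).choose (k+2) : ℤ) := by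
      have := ichoose_ofNat (2*k+1) (k+2)
      rwa [show ((k+2:ℕ):ℤ) = (k:ℤ)+2 from by push_cast; ring] at this
    have c4 : ichoose (2*k+1) ((k:ℤ)) = ((2*k+1).choose k : ℤ) := ichoose_ofNat (2*k+1) k
    have c5 : ichoose (2*k+1) ((k:ℤ)+1) = ((2*k+1).choose (k+1) : ℤ) := by
      have := ichoose_ofNat (2*k+1) (k+1)
      rwa [show ((k+1:ℕ):ℤ) = (k:ℤ)+1 from by push_cast; ring] at this
    rw [c1, c2, c3, c4, c5]
    push_cast
    obtain ⟨r1, r2, r3, r4, r5, r6⟩ := choose_ratios k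
    rw [r1, r2, r3, r4, r5, r6]
    have hpos : (2*(k:ℚ)+3) ≠ 0 := by positivity
    rw [show 2*((k:ℚ)+2)-1 = 2*(k:ℚ)+3 from by ring]
    field_simp
    ring
    done
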